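/- Let p ≥ 1, let N* be the real vector space of p×p complex skew-Hermitian matrices with Euclidean norm ‖m‖ = (Tr(m mᴴ))^{1/2} and Lebesgue measure, and let f₀(m) = e^{-‖m‖}/‖m‖^{p²/2}. There is no g ∈ L²(N*) such that for every skew-Hermitian matrix n one has (e^{i·Tr(nm)} − 1)·f₀(m) = e^{i·Tr(nm)}·g(m) − g(m) for almost every m. In other words, the 1-cocycle β(n) = T(n)f₀ − f₀ of the representation T(n)f(m) = e^{i·Tr(nm)}f(m) is not a coboundary, so T is a special representation of N. -/

import Mathlib

open MeasureTheory Matrix Set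
open scoped ENNReal

noncomputable section

instance (p : ℕ) : MeasurableSpace (Matrix (Fin p) (Fin p) ℂ) :=
  inferInstanceAs (MeasurableSpace ((Fin p) → (Fin p) → ℂ))

instance (p : ℕ) : BorelSpace (Matrix (Fin p) (Fin p) ℂ) :=
  inferInstanceAs (BorelSpace ((Fin p) → (Fin p) → ℂ))

/-- `N*`, the real vector space of `p×p` complex skew-Hermitian matrices (`mᴴ = -m`),
of real dimension `p²`. -/
abbrev SkewHerm (p : ℕ) : Type := skewAdjoint (Matrix (Fin p) (Fin p) ℂ)

/-- The Euclidean (Frobenius) norm `‖m‖ = (Tr (m mᴴ))^{1/2}` on matrices. -/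
def matNorm {p : ℕ} (m : Matrix (Fin p) (Fin p) ℂ) : ℝ :=
  Real.sqrt ((m * mᴴ).trace.re)

/-- The function `f₀(m) = e^{-‖m‖} / ‖m‖^{p²/2}` on `N*`. -/
def f₀ (p : ℕ) (m : SkewHerm p) : ℝ :=
  Real.exp (-matNorm (m : Matrix (Fin p) (Fin p) ℂ)) /
    matNorm (m : Matrix (Fin p) (Fin p) ℂ) ^ ((p ^ 2 : ℝ) / 2)

/-- The action `m ↦ sᴴ m s` of a matrix `s` on the space `N*` of skew-Hermitian matrices. -/
def conjAct {p : ℕ} (s : Matrix (Fin p) (Fin p) ℂ) (m : SkewHerm p) : SkewHerm p :=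
  ⟨sᴴ * (m : Matrix (Fin p) (Fin p) ℂ) * s, by
    have hm : (m : Matrix (Fin p) (Fin p) ℂ)ᴴ = -(m : Matrix (Fin p) (Fin p) ℂ) := m.2
    simp [skewAdjoint.mem_iff, Matrix.star_eq_conjTranspose, Matrix.conjTranspose_mul,
      Matrix.mul_assoc, hm]⟩

/-- The operator `T_a(s) f (m) = (‖sᴴ m s‖/‖m‖)^{p²/2} · f(sᴴ m s)` associated with the
multiplicative cocycle `a(m) = ‖m‖^{p²/2}`. -/
def Ta (p : ℕ) (s : Matrix (Fin p) (Fin p) ℂ) (f : SkewHerm p → ℂ) : SkewHerm p → ℂ :=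
  fun m =>
    (((matNorm (sᴴ * (m : Matrix (Fin p) (Fin p) ℂ) * s) /
        matNorm (m : Matrix (Fin p) (Fin p) ℂ)) ^ ((p ^ 2 : ℝ) / 2) : ℝ) : ℂ) *
      f (conjAct s m)

namespace Aux

lemma trace_mul_conjTranspose {p : ℕ} (m : Matrix (Fin p) (Fin p) ℂ) :
    (m * mᴴ).trace.re = ∑ i, ∑ j, Complex.normSq (m i j) := by
  rw [Matrix.trace]
  rw [Complex.re_sum]
  congr 1; funext i
  rw [Matrix.diag_apply, Matrix.mul_apply, Complex.re_sum]
  congr 1; funext j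
  rw [Matrix.conjTranspose_apply]
  have h := Complex.mul_conj (m i j)
  rw [show (star (m i j)) = (starRingEnd ℂ) (m i j) from rfl, h, Complex.ofReal_re]


lemma matNorm_eq {p : ℕ} (m : Matrix (Fin p) (Fin p) ℂ) :
    matNorm m = Real.sqrt (∑ i, ∑ j, Complex.normSq (m i j)) := by
  rw [matNorm, trace_mul_conjTranspose]

lemma matNorm_nonneg {p : ℕ} (m : Matrix (Fin p) (Fin p) ℂ) : 0 ≤ matNorm m :=
  Real.sqrt_nonneg _

lemma matNorm_pos {p : ℕ} {m : Matrix (Fin p) (Fin p) ℂ} (hm : m ≠ 0) : 0 < matNorm m := by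
  rw [matNorm_eq, Real.sqrt_pos]
  obtain ⟨i, j, hij⟩ : ∃ i j, m i j ≠ 0 := by
    by_contra h; push_neg at h; exact hm (by ext i j; simp [h])
  have h1 : ∀ i ∈ Finset.univ, (0:ℝ) ≤ ∑ j, Complex.normSq (m i j) :=
    fun i _ => Finset.sum_nonneg fun j _ => Complex.normSq_nonneg _
  refine Finset.sum_pos' h1 ⟨i, Finset.mem_univ _, ?_⟩
  refine Finset.sum_pos' (fun j _ => Complex.normSq_nonneg _) ⟨j, Finset.mem_univ _, ?_⟩
  exact Complex.normSq_pos.2 hij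

/-- the inverse map: real matrix to skew-Hermitian matrix -/
def toMat (p : ℕ) (a : Fin p → Fin p → ℝ) : Matrix (Fin p) (Fin p) ℂ := fun i j =>
  if i = j then (a i i : ℂ) * Complex.I
  else if (i : ℕ) < (j : ℕ) then ((a i j : ℝ) : ℂ) + ((a j i : ℝ) : ℂ) * Complex.I
  else ((-(a j i) : ℝ) : ℂ) + ((a i j : ℝ) : ℂ) * Complex.I

lemma toMat_mem (p : ℕ) (a : Fin p → Fin p → ℝ) :
    toMat p a ∈ skewAdjoint (Matrix (Fin p) (Fin p) ℂ) := by
  rw [skewAdjoint.mem_iff]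
  ext i j
  rw [Matrix.star_eq_conjTranspose, Matrix.conjTranspose_apply, Matrix.neg_apply]
  rcases lt_trichotomy (i : ℕ) (j : ℕ) with h | h | h
  · have hij : i ≠ j := fun he => by simp [he] at h
    have hji : j ≠ i := fun he => by simp [he] at h
    have h' : ¬ ((j:ℕ) < i) := by omega
    simp only [toMat, if_neg hij, if_neg hji, if_pos h, if_neg h', Matrix.star_apply]
    simp [Complex.ext_iff]
  · have hij : i = j := Fin.ext h
    simp only [toMat, hij, if_pos rfl, Matrix.star_apply]
    simp [Complex.ext_iff]
  · have hij : i ≠ j := fun he => by simp [he] at h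
    have hji : j ≠ i := fun he => by simp [he] at h
    have h' : ¬ ((i:ℕ) < j) := by omega
    simp only [toMat, if_neg hij, if_neg hji, if_pos h, if_neg h', Matrix.star_apply]
    simp [Complex.ext_iff]

/-- the forward map: skew-Hermitian matrix to real matrix of coordinates -/
def fwd (p : ℕ) (m : Matrix (Fin p) (Fin p) ℂ) : Fin p → Fin p → ℝ := fun i j =>
  if i = j then (m i i).im else if (i : ℕ) < (j : ℕ) then (m i j).re else (m i j).im

lemma fwd_toMat (p : ℕ) (a : Fin p → Fin p → ℝ) : fwd p (toMat p a) = a := by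
  funext i j
  rcases lt_trichotomy (i : ℕ) (j : ℕ) with h | h | h
  · have hij : i ≠ j := fun he => by simp [he] at h
    simp [fwd, toMat, if_neg hij, if_pos h, h]
  · have hij : i = j := Fin.ext h
    simp [fwd, toMat, hij]
  · have hij : i ≠ j := fun he => by simp [he] at h
    have h' : ¬ ((i:ℕ) < (j:ℕ)) := by omega
    simp [fwd, toMat, if_neg hij, if_neg h', h']

lemma toMat_fwd (p : ℕ) (m : Matrix (Fin p) (Fin p) ℂ)
    (hm : mᴴ = -m) : toMat p (fwd p m) = m := by
  have key : ∀ i j, (starRingEnd ℂ) (m j i) = -(m i j) := by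
    intro i j
    have := congrFun (congrFun hm i) j
    rwa [Matrix.conjTranspose_apply, Matrix.neg_apply] at this
  funext i j
  rcases lt_trichotomy (i : ℕ) (j : ℕ) with h | h | h
  · have hij : i ≠ j := fun he => by simp [he] at h
    have hji : j ≠ i := fun he => by simp [he] at h
    have h' : ¬ ((j:ℕ) < (i:ℕ)) := by omega
    have hk := key i j
    rw [Complex.ext_iff] at hk
    simp only [Complex.conj_re, Complex.conj_im, Complex.neg_re, Complex.neg_im] at hk
    simp only [toMat, fwd, if_neg hij, if_pos h, if_neg hji, if_neg h']
    rw [Complex.ext_iff, Complex.add_re, Complex.add_im]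
    simp only [Complex.ofReal_re, Complex.ofReal_im, Complex.mul_re, Complex.mul_im,
      Complex.I_re, Complex.I_im]
    constructor <;> [skip; skip] <;> ring_nf <;> linarith [hk.1, hk.2]
  · have hij : i = j := Fin.ext h
    subst hij
    have hk := key i i
    rw [Complex.ext_iff] at hk
    simp only [Complex.conj_re, Complex.conj_im, Complex.neg_re, Complex.neg_im] at hk
    simp only [toMat, fwd, Complex.ext_iff, Complex.mul_re, Complex.mul_im,
      Complex.ofReal_re, Complex.ofReal_im, Complex.I_re, Complex.I_im, if_pos rfl,
      ite_true, eq_self_iff_true]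
    norm_num
    linarith [hk.1]
  · have hij : i ≠ j := fun he => by simp [he] at h
    have hji : j ≠ i := fun he => by simp [he] at h
    have h' : ¬ ((i:ℕ) < (j:ℕ)) := by omega
    have hk := key i j
    rw [Complex.ext_iff] at hk
    simp only [Complex.conj_re, Complex.conj_im, Complex.neg_re, Complex.neg_im] at hk
    simp only [toMat, fwd, if_neg hij, if_neg h', if_neg hji, if_pos h]
    rw [Complex.ext_iff, Complex.add_re, Complex.add_im]
    simp only [Complex.ofReal_re, Complex.ofReal_im, Complex.mul_re, Complex.mul_im,
      Complex.I_re, Complex.I_im]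
    constructor <;> ring_nf <;> linarith [hk.1, hk.2]


lemma continuous_fwdFull (p : ℕ) : Continuous fun m : Matrix (Fin p) (Fin p) ℂ => fwd p m := by
  apply continuous_pi; intro i; apply continuous_pi; intro j
  have hm : ∀ (k l : Fin p), Continuous fun m : Matrix (Fin p) (Fin p) ℂ => m k l :=
    fun k l => (continuous_apply l).comp (continuous_apply k)
  by_cases h : i = j
  · simpa [fwd, h, Function.comp_def] using Complex.continuous_im.comp (hm j j)
  · by_cases h' : (i:ℕ) < (j:ℕ)
    · simpa [fwd, h, h', Function.comp_def] using Complex.continuous_re.comp (hm i j)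
    · simpa [fwd, h, h', Function.comp_def] using Complex.continuous_im.comp (hm i j)

lemma continuous_toMatFull (p : ℕ) : Continuous fun a : Fin p → Fin p → ℝ => toMat p a := by
  apply continuous_pi; intro i; apply continuous_pi; intro j
  have hm : ∀ (k l : Fin p), Continuous fun a : Fin p → Fin p → ℝ => a k l :=
    fun k l => (continuous_apply l).comp (continuous_apply k)
  by_cases h : i = j
  · simpa [toMat, h, Function.comp_def, Pi.mul_def] using (Complex.continuous_ofReal.comp (hm j j)).mul continuous_const
  · by_cases h' : (i:ℕ) < (j:ℕ)
    · simpa [toMat, h, h', Function.comp_def, Pi.mul_def, Pi.add_def, Pi.neg_def] using (Complex.continuous_ofReal.comp (hm i j)).add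
        ((Complex.continuous_ofReal.comp (hm j i)).mul continuous_const)
    · simpa [toMat, h, h', Function.comp_def, Pi.mul_def, Pi.add_def, Pi.neg_def] using (Complex.continuous_ofReal.comp ((hm j i).neg)).add
        ((Complex.continuous_ofReal.comp (hm i j)).mul continuous_const)

instance (p : ℕ) : BorelSpace (SkewHerm p) :=
  Subtype.borelSpace {m : Matrix (Fin p) (Fin p) ℂ | m ∈ skewAdjoint (Matrix (Fin p) (Fin p) ℂ)}

/-- the linear coordinate equivalence -/
def eqv (p : ℕ) : SkewHerm p ≃ₗ[ℝ] (Fin p → Fin p → ℝ) where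
  toFun m := fwd p (m : Matrix (Fin p) (Fin p) ℂ)
  invFun a := ⟨toMat p a, toMat_mem p a⟩
  map_add' m n := by
    funext i j
    simp only [AddSubgroup.coe_add, fwd, Pi.add_apply, Matrix.add_apply]
    split_ifs <;> simp
  map_smul' r m := by
    funext i j
    simp only [fwd, RingHom.id_apply, Pi.smul_apply, skewAdjoint.val_smul, Matrix.smul_apply,
      Complex.smul_re, Complex.smul_im, smul_eq_mul]
    split_ifs <;> simp [Complex.smul_re, Complex.smul_im]
  left_inv m := by
    apply Subtype.ext
    refine toMat_fwd p _ ?_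
    have := skewAdjoint.mem_iff.mp m.2
    rwa [Matrix.star_eq_conjTranspose] at this
  right_inv a := fwd_toMat p a

/-- the continuous linear coordinate equivalence -/
def eqvL (p : ℕ) : SkewHerm p ≃L[ℝ] (Fin p → Fin p → ℝ) :=
  { eqv p with
    continuous_toFun := (continuous_fwdFull p).comp continuous_subtype_val
    continuous_invFun := Continuous.subtype_mk (continuous_toMatFull p) _ }

lemma matNorm_toMat_le (p : ℕ) (a : Fin p → Fin p → ℝ) :
    matNorm (toMat p a) ≤ (2 * p + 2) * ‖a‖ := by
  rw [matNorm_eq]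
  have habs : ∀ i j : Fin p, |a i j| ≤ ‖a‖ := by
    intro i j
    calc |a i j| = ‖a i j‖ := (Real.norm_eq_abs _).symm
    _ ≤ ‖a i‖ := norm_le_pi_norm (a i) j
    _ ≤ ‖a‖ := norm_le_pi_norm a i
  have hentry : ∀ i j : Fin p, Complex.normSq (toMat p a i j) ≤ 2 * ‖a‖ ^ 2 := by
    intro i j
    have h1 := habs i j
    have h2 := habs j i
    have h3 := habs i i
    have h0 := norm_nonneg a
    unfold toMat
    split_ifs with hc1 hc2
    · rw [Complex.normSq_mul, Complex.normSq_I, Complex.normSq_ofReal]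
      nlinarith [pow_le_pow_left₀ (abs_nonneg (a i j)) h1 2, pow_le_pow_left₀ (abs_nonneg (a j i)) h2 2, pow_le_pow_left₀ (abs_nonneg (a i i)) h3 2, sq_abs (a i j), sq_abs (a j i), sq_abs (a i i), sq_nonneg (a i j), sq_nonneg (a j i)]
    · rw [Complex.normSq_add_mul_I]
      nlinarith [pow_le_pow_left₀ (abs_nonneg (a i j)) h1 2, pow_le_pow_left₀ (abs_nonneg (a j i)) h2 2, pow_le_pow_left₀ (abs_nonneg (a i i)) h3 2, sq_abs (a i j), sq_abs (a j i), sq_abs (a i i), sq_nonneg (a i j), sq_nonneg (a j i)]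
    · rw [show ((-(a j i) : ℝ) : ℂ) = ((-(a j i) : ℝ) : ℂ) from rfl, Complex.normSq_add_mul_I]
      nlinarith [pow_le_pow_left₀ (abs_nonneg (a i j)) h1 2, pow_le_pow_left₀ (abs_nonneg (a j i)) h2 2, pow_le_pow_left₀ (abs_nonneg (a i i)) h3 2, sq_abs (a i j), sq_abs (a j i), sq_abs (a i i), sq_nonneg (a i j), sq_nonneg (a j i)]
  have hsum : (∑ i, ∑ j, Complex.normSq (toMat p a i j)) ≤ ((2 * p + 2) * ‖a‖) ^ 2 := by
    have h1 : (∑ i, ∑ j, Complex.normSq (toMat p a i j)) ≤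
        ∑ _i : Fin p, ∑ _j : Fin p, 2 * ‖a‖ ^ 2 :=
      Finset.sum_le_sum fun i _ => Finset.sum_le_sum fun j _ => hentry i j
    have h2 : (∑ _i : Fin p, ∑ _j : Fin p, 2 * ‖a‖ ^ 2) = (p : ℝ) * ((p : ℝ) * (2 * ‖a‖ ^ 2)) := by
      simp [Finset.sum_const, Finset.card_univ, mul_assoc]
    rw [h2] at h1
    have h0 := norm_nonneg a
    nlinarith [sq_nonneg ((p:ℝ) * ‖a‖), sq_nonneg ‖a‖, Nat.cast_nonneg (α := ℝ) p]
  calc Real.sqrt (∑ i, ∑ j, Complex.normSq (toMat p a i j))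
      ≤ Real.sqrt (((2 * p + 2) * ‖a‖) ^ 2) := Real.sqrt_le_sqrt hsum
    _ = (2 * p + 2) * ‖a‖ := Real.sqrt_sq (by positivity)

lemma continuous_matNorm (p : ℕ) : Continuous fun m : Matrix (Fin p) (Fin p) ℂ => matNorm m := by
  have : (fun m : Matrix (Fin p) (Fin p) ℂ => matNorm m)
      = fun m => Real.sqrt (∑ i, ∑ j, Complex.normSq (m i j)) := by
    funext m; exact matNorm_eq m
  rw [this]
  exact Real.continuous_sqrt.comp (continuous_finset_sum _ fun i _ =>
    continuous_finset_sum _ fun j _ =>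
      Complex.continuous_normSq.comp ((continuous_apply j).comp (continuous_apply i)))


lemma lintegral_eq_top_of_inv_pow_le
    {F : Type*} [NormedAddCommGroup F] [NormedSpace ℝ F] [MeasurableSpace F] [BorelSpace F]
    [FiniteDimensional ℝ F] [Nontrivial F]
    (ν : Measure F) [ν.IsAddHaarMeasure]
    {H : F → ℝ≥0∞} {ε : ℝ} (hε : 0 < ε) {d : ℕ} (hdim : Module.finrank ℝ F = d)
    (hH : ∀ x : F, x ≠ 0 → ‖x‖ < 1 → ENNReal.ofReal (ε / ‖x‖ ^ d) ≤ H x) :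
    ∫⁻ x, H x ∂ν = ∞ := by
  have hd : 0 < d := hdim ▸ Module.finrank_pos
  set r : ℕ → ℝ := fun k => (2:ℝ)⁻¹ ^ k with hr
  have hrpos : ∀ k, 0 < r k := fun k => pow_pos (by norm_num) k
  have hrle1 : ∀ k, r k ≤ 1 := fun k => pow_le_one₀ (by norm_num) (by norm_num)
  have hrmono : ∀ k l, k ≤ l → r l ≤ r k := fun k l h =>
    pow_le_pow_of_le_one (by norm_num) (by norm_num) h
  set A : ℕ → Set F := fun k => Metric.ball (0:F) (r k) \ Metric.ball 0 (r (k+1)) with hA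
  have hmeas : ∀ k, MeasurableSet (A k) := fun k => measurableSet_ball.diff measurableSet_ball
  have hdisj : Pairwise (Function.onFun Disjoint A) := by
    have aux : ∀ k l, k < l → Disjoint (A k) (A l) := by
      intro k l hkl
      refine Set.disjoint_left.2 fun x hxk hxl => ?_
      exact hxk.2 (Metric.ball_subset_ball (hrmono (k+1) l hkl) hxl.1)
    intro k l h
    rcases h.lt_or_gt with h' | h'
    · exact aux _ _ h'
    · exact (aux _ _ h').symm
  set B := ν (Metric.ball (0:F) 1) with hB
  have hB0 : B ≠ 0 := (Metric.measure_ball_pos ν 0 one_pos).ne'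
  have hBtop : B ≠ ∞ := measure_ball_lt_top.ne
  set δ := ENNReal.ofReal (ε * (1 - (2:ℝ)⁻¹ ^ d)) * B with hδ
  have hq1 : (2:ℝ)⁻¹ ^ d < 1 := pow_lt_one₀ (by norm_num) (by norm_num) hd.ne'
  have hδ0 : δ ≠ 0 := by
    refine mul_ne_zero ?_ hB0
    exact (ENNReal.ofReal_pos.2 (by nlinarith)).ne'
  have hAk : ∀ k, ν (A k) = (ENNReal.ofReal (r k ^ d) - ENNReal.ofReal (r (k+1) ^ d)) * B := by
    intro k
    rw [hA]
    rw [measure_diff (Metric.ball_subset_ball (hrmono k (k+1) (Nat.le_succ k)))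
      measurableSet_ball.nullMeasurableSet measure_ball_lt_top.ne]
    rw [Measure.addHaar_ball ν 0 (hrpos k).le, Measure.addHaar_ball ν 0 (hrpos (k+1)).le, hdim]
    rw [ENNReal.sub_mul fun _ _ => hBtop]
  have hbound : ∀ k, δ ≤ ∫⁻ x in A k, H x ∂ν := by
    intro k
    have hball : ∀ x ∈ A k, ENNReal.ofReal (ε / r k ^ d) ≤ H x := by
      intro x hx
      have hx1 : ‖x‖ < r k := by simpa [mem_ball_zero_iff] using hx.1
      have hx2 : r (k+1) ≤ ‖x‖ := by
        have := hx.2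
        simpa [mem_ball_zero_iff, not_lt] using this
      have hx0 : x ≠ 0 := by
        intro h
        rw [h, norm_zero] at hx2
        exact absurd hx2 (not_le.2 (hrpos (k+1)))
      refine le_trans (ENNReal.ofReal_le_ofReal ?_) (hH x hx0 (lt_of_lt_of_le hx1 (hrle1 k)))
      have hxpow : 0 < ‖x‖ ^ d := pow_pos (lt_of_lt_of_le (hrpos (k+1)) hx2) d
      have hple : ‖x‖ ^ d ≤ r k ^ d := pow_le_pow_left₀ (norm_nonneg x) hx1.le d
      exact div_le_div_of_nonneg_left hε.le hxpow hple
    have step1 : δ = ENNReal.ofReal (ε / r k ^ d) * ν (A k) := by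
      rw [hAk k, ← mul_assoc, hδ]
      congr 1
      rw [← ENNReal.ofReal_sub _ (by positivity : (0:ℝ) ≤ r (k+1) ^ d),
        ← ENNReal.ofReal_mul (by positivity : (0:ℝ) ≤ ε / r k ^ d)]
      congr 1
      have hR : r k ^ d ≠ 0 := (pow_pos (hrpos k) d).ne'
      have hsucc : r (k+1) ^ d = r k ^ d * (2:ℝ)⁻¹ ^ d := by
        simp only [hr]
        rw [pow_succ, mul_pow]
      rw [hsucc]
      field_simp
    rw [step1]
    calc ENNReal.ofReal (ε / r k ^ d) * ν (A k)
        = ∫⁻ _x in A k, ENNReal.ofReal (ε / r k ^ d) ∂ν := (setLIntegral_const _ _).symm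
      _ ≤ ∫⁻ x in A k, H x ∂ν :=
          lintegral_mono_ae (ae_restrict_of_forall_mem (hmeas k) hball)
  have h1 : ∑' _k : ℕ, δ ≤ ∑' k, ∫⁻ x in A k, H x ∂ν := ENNReal.tsum_le_tsum hbound
  rw [← lintegral_iUnion hmeas hdisj] at h1
  have h2 : ∫⁻ x in ⋃ k, A k, H x ∂ν ≤ ∫⁻ x, H x ∂ν :=
    lintegral_mono' Measure.restrict_le_self le_rfl
  have h3 : (⊤:ℝ≥0∞) ≤ ∫⁻ x, H x ∂ν := by
    rw [← ENNReal.tsum_const_eq_top_of_ne_zero (α := ℕ) hδ0]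
    exact h1.trans h2
  exact top_le_iff.mp h3


lemma finrank_E (p : ℕ) : Module.finrank ℝ (Fin p → Fin p → ℝ) = p ^ 2 := by
  rw [Module.finrank_pi_fintype]
  simp only [Module.finrank_pi, Fintype.card_fin, Finset.sum_const, Finset.card_univ,
    smul_eq_mul]
  ring

lemma fwd_zero (p : ℕ) : fwd p 0 = 0 := by
  funext i j
  simp only [fwd, Matrix.zero_apply, Complex.zero_re, Complex.zero_im, Pi.zero_apply]
  split_ifs <;> rfl

lemma not_memLp (p : ℕ) (hp : 1 ≤ p) (μ : Measure (SkewHerm p)) [μ.IsAddHaarMeasure] :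
    ¬ MemLp (fun m => (f₀ p m : ℂ)) 2 μ := by
  intro hmem
  haveI : Nonempty (Fin p) := ⟨⟨0, hp⟩⟩
  haveI : Nontrivial (Fin p → Fin p → ℝ) := Function.nontrivial
  set φ : SkewHerm p → (Fin p → Fin p → ℝ) := fun m => fwd p m.1 with hφ
  set ψ : (Fin p → Fin p → ℝ) → SkewHerm p := fun a => ⟨toMat p a, toMat_mem p a⟩ with hψ
  have hφcont : Continuous φ := (continuous_fwdFull p).comp continuous_subtype_val
  have hψφ : ∀ m : SkewHerm p, ψ (φ m) = m := by
    intro m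
    apply Subtype.ext
    refine toMat_fwd p _ ?_
    have h := skewAdjoint.mem_iff.mp m.2
    rwa [Matrix.star_eq_conjTranspose] at h
  set ν := Measure.map φ μ with hν
  haveI : ν.IsAddHaarMeasure :=
    ContinuousLinearEquiv.isAddHaarMeasure_map (eqvL p) μ
  -- the transported integrand
  set H : (Fin p → Fin p → ℝ) → ℝ≥0∞ :=
    fun x => (‖(f₀ p (ψ x) : ℂ)‖₊ : ℝ≥0∞) ^ (2:ℝ) with hH
  have hrmeas : Measurable fun x : Fin p → Fin p → ℝ => matNorm (toMat p x) :=
    ((continuous_matNorm p).comp (continuous_toMatFull p)).measurable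
  have hHmeas : Measurable H := by
    apply Measurable.pow _ measurable_const
    apply Measurable.coe_nnreal_ennreal
    apply Measurable.nnnorm
    apply Complex.measurable_ofReal.comp
    have heq : (fun x : Fin p → Fin p → ℝ => f₀ p (ψ x))
        = fun x => Real.exp (-(matNorm (toMat p x))) /
            (matNorm (toMat p x)) ^ ((p ^ 2 : ℝ) / 2) := rfl
    rw [heq]
    exact (Real.measurable_exp.comp hrmeas.neg).div (hrmeas.pow measurable_const)
  have hint : ∫⁻ m, (‖(f₀ p m : ℂ)‖₊ : ℝ≥0∞) ^ (2:ℝ) ∂μ = ∫⁻ x, H x ∂ν := by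
    rw [hν, lintegral_map hHmeas hφcont.measurable]
    congr 1
    funext m
    rw [hH]
    simp only []
    rw [hψφ m]
  set C : ℝ := 2 * p + 2 with hC
  have hCpos : 0 < C := by positivity
  have hC1 : 1 ≤ C := by rw [hC]; have := Nat.cast_nonneg (α := ℝ) p; linarith
  set ε : ℝ := Real.exp (-(2*C)) / C ^ (p^2) with hε'
  have hε : 0 < ε := by positivity
  have hHlow : ∀ x : Fin p → Fin p → ℝ, x ≠ 0 → ‖x‖ < 1 →
      ENNReal.ofReal (ε / ‖x‖ ^ (p^2)) ≤ H x := by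
    intro x hx0 hxlt
    have hnx : 0 < ‖x‖ := norm_pos_iff.2 hx0
    have htm0 : toMat p x ≠ 0 := by
      intro h
      apply hx0
      have := fwd_toMat p x
      rw [h, fwd_zero] at this
      exact this.symm
    set rr : ℝ := matNorm (toMat p x) with hrr
    have hrpos : 0 < rr := matNorm_pos htm0
    have hrle : rr ≤ C * ‖x‖ := by
      rw [hrr, hC]; exact matNorm_toMat_le p x
    have hrleC : rr ≤ C := le_trans hrle (by nlinarith)
    set q : ℝ := ((p:ℝ) ^ 2) / 2 with hq
    have hv : f₀ p (ψ x) = Real.exp (-rr) / rr ^ q := rfl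
    have hvnn : 0 ≤ f₀ p (ψ x) := by
      rw [hv]; positivity
    have hcast : H x = ENNReal.ofReal ((Real.exp (-rr) / rr ^ q) ^ (2:ℝ)) := by
      have hvnn' : 0 ≤ Real.exp (-rr) / rr ^ q := hv ▸ hvnn
      rw [hH]
      simp only []
      rw [hv, Complex.nnnorm_real, ← enorm_eq_nnnorm, Real.enorm_eq_ofReal hvnn',
        ENNReal.ofReal_rpow_of_nonneg hvnn' (by norm_num)]
    rw [hcast]
    apply ENNReal.ofReal_le_ofReal
    have hsq : (Real.exp (-rr) / rr ^ q) ^ (2:ℝ)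
        = Real.exp (-(2*rr)) / rr ^ (p^2 : ℕ) := by
      rw [show (2:ℝ) = ((2:ℕ):ℝ) by norm_num, Real.rpow_natCast]
      rw [pow_two, div_mul_div_comm, ← Real.exp_add, ← Real.rpow_add hrpos]
      congr 1
      · ring_nf
      · rw [show q + q = ((p^2 : ℕ) : ℝ) by rw [hq]; push_cast; ring, Real.rpow_natCast]
    rw [hsq, hε', div_div]
    refine div_le_div₀ (Real.exp_pos _).le ?_ (pow_pos hrpos _) ?_
    · apply Real.exp_le_exp.2
      nlinarith
    · calc rr ^ (p^2 : ℕ) ≤ (C * ‖x‖) ^ (p^2 : ℕ) :=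
            pow_le_pow_left₀ hrpos.le hrle _
        _ = C ^ (p^2:ℕ) * ‖x‖ ^ (p^2:ℕ) := mul_pow _ _ _
  have htop : ∫⁻ x, H x ∂ν = ∞ :=
    lintegral_eq_top_of_inv_pow_le ν hε (finrank_E p) hHlow
  have h2 := hmem.2
  rw [eLpNorm_eq_lintegral_rpow_enorm_toReal (by norm_num) (by norm_num)] at h2
  simp only [ENNReal.toReal_ofNat, enorm_eq_nnnorm] at h2
  rw [hint, htop] at h2
  rw [ENNReal.top_rpow_of_pos (by norm_num)] at h2
  exact lt_irrefl _ h2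


lemma trace_re_zero {p : ℕ} (m : SkewHerm p) :
    ((m : Matrix (Fin p) (Fin p) ℂ).trace).re = 0 := by
  have h := skewAdjoint.mem_iff.mp m.2
  rw [Matrix.star_eq_conjTranspose] at h
  have htr : star ((m : Matrix (Fin p) (Fin p) ℂ).trace)
      = -((m : Matrix (Fin p) (Fin p) ℂ).trace) := by
    rw [← Matrix.trace_conjTranspose, h, Matrix.trace_neg]
  have := congrArg Complex.re htr
  simp only [Complex.star_def, Complex.conj_re, Complex.neg_re] at this
  linarith

lemma trace_eq {p : ℕ} (m : SkewHerm p) :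
    (m : Matrix (Fin p) (Fin p) ℂ).trace
      = ((((m : Matrix (Fin p) (Fin p) ℂ).trace).im : ℝ) : ℂ) * Complex.I := by
  rw [Complex.ext_iff]
  constructor
  · simp [trace_re_zero m]
  · simp

/-- the trace-imaginary-part functional -/
def ℓfun (p : ℕ) : SkewHerm p →ₗ[ℝ] ℝ where
  toFun m := ((m : Matrix (Fin p) (Fin p) ℂ).trace).im
  map_add' a b := by
    simp [AddSubgroup.coe_add, Matrix.trace_add]
  map_smul' r a := by
    simp [skewAdjoint.val_smul, Matrix.trace_smul, Complex.smul_im]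

set_option synthInstance.maxHeartbeats 1000000 in
set_option maxHeartbeats 2000000 in
lemma ker_null (p : ℕ) (hp : 1 ≤ p) (μ : Measure (SkewHerm p)) [μ.IsAddHaarMeasure] :
    μ {m : SkewHerm p | ((m : Matrix (Fin p) (Fin p) ℂ).trace).im = 0} = 0 := by
  haveI : Nonempty (Fin p) := ⟨⟨0, hp⟩⟩
  set K := LinearMap.ker (ℓfun p) with hK
  set Kmap := Submodule.map ((eqv p : SkewHerm p ≃ₗ[ℝ] (Fin p → Fin p → ℝ))
    : SkewHerm p →ₗ[ℝ] (Fin p → Fin p → ℝ)) K with hKmap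
  have hKm_ne : Kmap ≠ ⊤ := by
    intro hT
    set m₀ : SkewHerm p := ⟨Complex.I • 1, by
      rw [skewAdjoint.mem_iff, star_smul, star_one, Complex.star_def, Complex.conj_I,
        neg_smul]⟩ with hm₀
    have hℓ : ℓfun p m₀ = p := by
      show ((Complex.I • (1 : Matrix (Fin p) (Fin p) ℂ)).trace).im = p
      rw [Matrix.trace_smul, Matrix.trace_one, smul_eq_mul]
      simp
    have hmem : (eqv p) m₀ ∈ Kmap := by rw [hT]; trivial
    obtain ⟨m, hm, hme⟩ := hmem
    have heqm : m = m₀ := (eqv p).injective hme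
    rw [heqm] at hm
    have hm0 : ℓfun p m₀ = 0 := hm
    rw [hℓ] at hm0
    have : p = 0 := by exact_mod_cast hm0
    omega
  haveI : (μ.map (eqvL p)).IsAddHaarMeasure :=
    ContinuousLinearEquiv.isAddHaarMeasure_map (eqvL p) μ
  have hz : (μ.map (eqvL p)) (Kmap : Set (Fin p → Fin p → ℝ)) = 0 :=
    Measure.addHaar_submodule (μ.map (eqvL p)) Kmap hKm_ne
  have hclosed : IsClosed (Kmap : Set (Fin p → Fin p → ℝ)) :=
    Submodule.closed_of_finiteDimensional Kmap
  rw [Measure.map_apply (eqvL p).continuous.measurable hclosed.measurableSet] at hz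
  have hpre : ⇑(eqvL p) ⁻¹' (Kmap : Set (Fin p → Fin p → ℝ))
      = {m : SkewHerm p | ((m : Matrix (Fin p) (Fin p) ℂ).trace).im = 0} := by
    ext m
    simp only [Set.mem_preimage, SetLike.mem_coe, hKmap, Submodule.mem_map, Set.mem_setOf_eq]
    constructor
    · rintro ⟨k, hk, hke⟩
      have : k = m := (eqv p).injective hke
      rw [this] at hk
      exact hk
    · intro hm
      exact ⟨m, hm, rfl⟩
  rw [hpre] at hz
  exact hz

end Aux

/-- The 1-cocycle `β(n) = T(n) f₀ − f₀` of the representation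
`T(n) f (m) = e^{i Tr(nm)} f(m)` of the additive group `N` is not a coboundary:
there is no `g ∈ L²(N*)` with `(e^{i Tr(nm)} − 1) f₀(m) = e^{i Tr(nm)} g(m) − g(m)`
a.e. for every skew-Hermitian `n`.  Hence `T` is a special representation of `N`. -/
theorem cocycle_beta_not_coboundary (p : ℕ) (hp : 1 ≤ p)
    (μ : Measure (SkewHerm p)) [μ.IsAddHaarMeasure] :
    ¬ ∃ g : SkewHerm p → ℂ, MemLp g 2 μ ∧
      ∀ n : Matrix (Fin p) (Fin p) ℂ, nᴴ = -n →
        ∀ᵐ (m : SkewHerm p) ∂μ,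
          (Complex.exp (Complex.I * (n * (m : Matrix (Fin p) (Fin p) ℂ)).trace) - 1) *
              (f₀ p m : ℂ)
            = Complex.exp (Complex.I * (n * (m : Matrix (Fin p) (Fin p) ℂ)).trace) * g m
                - g m := by

  rintro ⟨g, hg, hrel⟩
  set c₂ : ℂ := ((Real.sqrt 2 : ℝ) : ℂ) * Complex.I with hc₂
  have hskew₁ : (Complex.I • (1 : Matrix (Fin p) (Fin p) ℂ))ᴴ = -(Complex.I • 1) := by
    rw [Matrix.conjTranspose_smul, Matrix.conjTranspose_one, Complex.star_def, Complex.conj_I,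
      neg_smul]
  have hskew₂ : (c₂ • (1 : Matrix (Fin p) (Fin p) ℂ))ᴴ = -(c₂ • 1) := by
    have hstar : star c₂ = -c₂ := by
      rw [hc₂, star_mul', Complex.star_def, Complex.conj_I, Complex.conj_ofReal]
      ring
    rw [Matrix.conjTranspose_smul, Matrix.conjTranspose_one, hstar, neg_smul]
  have h₁ := hrel (Complex.I • 1) hskew₁
  have h₂ := hrel (c₂ • 1) hskew₂
  have hnull := Aux.ker_null p hp μ
  rw [measure_eq_zero_iff_ae_notMem] at hnull
  have hgf : g =ᵐ[μ] fun m => ((f₀ p m : ℝ) : ℂ) := by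
    filter_upwards [h₁, h₂, hnull] with m e₁ e₂ hm
    set t : ℝ := (((m : Matrix (Fin p) (Fin p) ℂ)).trace).im with ht
    have htr : ((m : Matrix (Fin p) (Fin p) ℂ)).trace = (t : ℂ) * Complex.I := Aux.trace_eq m
    have hexp : ∀ E : ℂ, ((E - 1) * ((f₀ p m : ℝ) : ℂ) = E * g m - g m) →
        (g m = ((f₀ p m : ℝ) : ℂ) ∨ E = 1) := by
      intro E hE
      have h0 : (E - 1) * (((f₀ p m : ℝ) : ℂ) - g m) = 0 := by linear_combination hE
      rcases mul_eq_zero.mp h0 with h | h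
      · right
        have := sub_eq_zero.mp h
        exact this
      · left
        exact (sub_eq_zero.mp h).symm
    rcases hexp _ e₁ with hgood | hE₁
    · exact hgood
    rcases hexp _ e₂ with hgood | hE₂
    · exact hgood
    exfalso
    apply hm
    show t = 0
    have harg₁ : Complex.I * (((Complex.I • (1 : Matrix (Fin p) (Fin p) ℂ))
        * (m : Matrix (Fin p) (Fin p) ℂ)).trace) = ((-t : ℝ) : ℂ) * Complex.I := by
      rw [Matrix.smul_mul, Matrix.one_mul, Matrix.trace_smul, smul_eq_mul, htr]
      push_cast
      linear_combination ((t : ℂ) * Complex.I) * Complex.I_sq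
    have harg₂ : Complex.I * (((c₂ • (1 : Matrix (Fin p) (Fin p) ℂ))
        * (m : Matrix (Fin p) (Fin p) ℂ)).trace)
        = ((-(Real.sqrt 2 * t) : ℝ) : ℂ) * Complex.I := by
      rw [Matrix.smul_mul, Matrix.one_mul, Matrix.trace_smul, smul_eq_mul, htr, hc₂]
      push_cast
      linear_combination (((Real.sqrt 2 : ℝ) : ℂ) * (t : ℂ) * Complex.I) * Complex.I_sq
    rw [harg₁] at hE₁
    rw [harg₂] at hE₂
    obtain ⟨k₁, hk₁⟩ := Complex.exp_eq_one_iff.mp hE₁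
    obtain ⟨k₂, hk₂⟩ := Complex.exp_eq_one_iff.mp hE₂
    have e₁' : ((-t : ℝ) : ℂ) = (k₁ : ℂ) * (2 * (Real.pi : ℂ)) :=
      mul_right_cancel₀ Complex.I_ne_zero (hk₁.trans (by ring))
    have e₂' : ((-(Real.sqrt 2 * t) : ℝ) : ℂ) = (k₂ : ℂ) * (2 * (Real.pi : ℂ)) :=
      mul_right_cancel₀ Complex.I_ne_zero (hk₂.trans (by ring))
    have r₁ : -t = (k₁ : ℝ) * (2 * Real.pi) := by exact_mod_cast e₁'
    have r₂ : -(Real.sqrt 2 * t) = (k₂ : ℝ) * (2 * Real.pi) := by exact_mod_cast e₂'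
    by_contra ht0
    have hπ : (0 : ℝ) < 2 * Real.pi := by
      have := Real.pi_pos
      linarith
    have hk1ne : (k₁ : ℝ) ≠ 0 := by
      intro h
      apply ht0
      rw [h, zero_mul] at r₁
      linarith
    have hsq : Real.sqrt 2 * (k₁ : ℝ) = (k₂ : ℝ) := by
      have haux : Real.sqrt 2 * (-t) = (k₂ : ℝ) * (2 * Real.pi) := by
        rw [← r₂]
        ring
      rw [r₁] at haux
      have h2 : (Real.sqrt 2 * (k₁ : ℝ)) * (2 * Real.pi) = (k₂ : ℝ) * (2 * Real.pi) := by
        linear_combination haux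
      exact mul_right_cancel₀ hπ.ne' h2
    apply irrational_sqrt_two
    have hdiv : (((k₂ : ℚ) / (k₁ : ℚ) : ℚ) : ℝ) = Real.sqrt 2 := by
      push_cast
      rw [div_eq_iff (by exact_mod_cast hk1ne)]
      linarith [hsq]
    exact ⟨(k₂ : ℚ) / (k₁ : ℚ), hdiv⟩
  exact Aux.not_memLp p hp μ (MemLp.ae_eq hgf hg)


end
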